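/- arXiv:2509.16379 — 3 statements merged into one kernel-verified Lean document; each statement's English description precedes it below -/
import Mathlib

section
/- Let ρ be a finite positive Borel measure on ℝ^d with finite absolute moments of all orders, and suppose that for every θ ∈ S^{d−1} the univariate Hamburger moment problem for the slice ρ_θ is determinate. Then ρ is uniquely determined by the family of sliced moments {m_k^θ : θ ∈ S^{d−1}, k ∈ ℕ}, where m_k^θ = ∫ ⟨x,θ⟩^k dρ(x). -/
open MeasureTheory
open scoped FourierTransform RealInnerProductSpace

section Aux

variable {E : Type*} [NormedAddCommGroup E] [InnerProductSpace ℝ E]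

/-- A smooth compactly supported function is a Schwartz function. -/
noncomputable def SMD.toSchwartz {f : E → ℂ} (hf : ContDiff ℝ ((⊤ : ℕ∞)) f)
    (h2 : HasCompactSupport f) : SchwartzMap E ℂ where
  toFun := f
  smooth' := hf
  decay' := by
    intro k n
    have hcont : Continuous fun x => ‖x‖ ^ k * ‖iteratedFDeriv ℝ n f x‖ :=
      (continuous_norm.pow k).mul (hf.continuous_iteratedFDeriv (mod_cast le_top)).norm
    have hcs : HasCompactSupport fun x => ‖x‖ ^ k * ‖iteratedFDeriv ℝ n f x‖ :=
      ((h2.iteratedFDeriv n).norm).mul_left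
    rcases hcont.exists_forall_ge_of_hasCompactSupport hcs with ⟨x₀, hx₀⟩
    exact ⟨_, fun x => hx₀ x⟩

lemma SMD.toSchwartz_apply {f : E → ℂ} (hf : ContDiff ℝ ((⊤ : ℕ∞)) f)
    (h2 : HasCompactSupport f) (x : E) : SMD.toSchwartz hf h2 x = f x := rfl

open Metric Set Manifold in
/-- Smooth Urysohn lemma: a smooth compactly supported function sandwiched between the
indicator of a compact set and the indicator of an open neighborhood of it. -/
lemma SMD.smooth_urysohn [FiniteDimensional ℝ E] {K U : Set E}
    (hK : IsCompact K) (hU : IsOpen U) (hKU : K ⊆ U) :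
    ∃ g : E → ℝ, ContDiff ℝ ((⊤ : ℕ∞)) g ∧ HasCompactSupport g ∧ Set.EqOn g 1 K ∧
      Function.support g ⊆ U ∧ ∀ x, g x ∈ Set.Icc (0 : ℝ) 1 := by
  classical
  set V : Set E := U ∩ Metric.thickening 1 K with hV
  have hVopen : IsOpen V := hU.inter Metric.isOpen_thickening
  have hKV : K ⊆ V := subset_inter hKU (Metric.self_subset_thickening one_pos K)
  obtain ⟨f, hf0, hf1, hf01⟩ :=
    exists_contMDiffMap_zero_one_of_isClosed 𝓘(ℝ, E) (n := (⊤ : ℕ∞)) hVopen.isClosed_compl hK.isClosed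
      (disjoint_compl_left_iff_subset.mpr hKV)
  have hsupp : Function.support (f : E → ℝ) ⊆ V := by
    intro x hx
    by_contra hxV
    exact hx (hf0 hxV)
  have hVb : Bornology.IsBounded V :=
    (hK.isBounded.thickening).subset inter_subset_right
  have hcs : HasCompactSupport (f : E → ℝ) := by
    apply HasCompactSupport.of_support_subset_isCompact
      (K := closure V)
      (Metric.isCompact_of_isClosed_isBounded isClosed_closure hVb.closure)
    exact hsupp.trans subset_closure
  refine ⟨f, ?_, hcs, fun x hx => hf1 hx, hsupp.trans inter_subset_left, hf01⟩
  exact contMDiff_iff_contDiff.mp f.contMDiff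

end Aux

section CharUniq

variable {E : Type*} [NormedAddCommGroup E] [InnerProductSpace ℝ E]
  [FiniteDimensional ℝ E] [MeasurableSpace E] [BorelSpace E]

/-- If two finite measures have the same characteristic function, then they give the same
integral to every complex Schwartz function. -/
lemma SMD.integral_schwartz_eq (η ρ : Measure E) [IsFiniteMeasure η] [IsFiniteMeasure ρ]
    (h : ∀ w : E, ∫ x, (𝐞 ⟪w, x⟫ : ℂ) ∂η = ∫ x, (𝐞 ⟪w, x⟫ : ℂ) ∂ρ)
    (φ : SchwartzMap E ℂ) : ∫ x, φ x ∂η = ∫ x, φ x ∂ρ := by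
  set ψ : SchwartzMap E ℂ := SchwartzMap.fourierTransformCLM ℂ φ with hψ
  have hinv : ∀ x : E, φ x = ∫ w, (𝐞 ⟪w, x⟫ : ℂ) * ψ w := by
    intro x
    have h1 : 𝓕⁻ (𝓕 (φ : E → ℂ)) = φ :=
      φ.continuous.fourierInv_fourier_eq φ.integrable ψ.integrable
    conv_lhs => rw [← h1]
    rw [Real.fourierInv_eq]
    simp_rw [Circle.smul_def]
    rfl
  have key : ∀ μ : Measure E, IsFiniteMeasure μ →
      ∫ x, φ x ∂μ = ∫ w, (∫ x, (𝐞 ⟪w, x⟫ : ℂ) ∂μ) * ψ w := by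
    intro μ hμ
    have hcont : Continuous fun p : E × E => (𝐞 ⟪p.2, p.1⟫ : ℂ) * ψ p.2 := by
      apply Continuous.mul
      · exact continuous_subtype_val.comp
          (Real.continuous_fourierChar.comp
            (continuous_inner.comp (continuous_snd.prodMk continuous_fst)))
      · exact ψ.continuous.comp continuous_snd
    have hint : Integrable (Function.uncurry fun x w => (𝐞 ⟪w, x⟫ : ℂ) * ψ w)
        (μ.prod volume) := by
      refine ⟨hcont.aestronglyMeasurable, ?_⟩
      have hb : Integrable (fun p : E × E => (1 : ℝ) * ‖ψ p.2‖) (μ.prod volume) :=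
        (integrable_const (1 : ℝ)).mul_prod ψ.integrable.norm
      refine hb.hasFiniteIntegral.mono (Filter.Eventually.of_forall ?_)
      intro p
      simp only [Function.uncurry, norm_mul, one_mul, norm_norm]
      have : ‖((𝐞 ⟪p.2, p.1⟫ : Circle) : ℂ)‖ = 1 := by
        exact Circle.norm_coe _
      rw [this, one_mul]
    calc ∫ x, φ x ∂μ = ∫ x, ∫ w, (𝐞 ⟪w, x⟫ : ℂ) * ψ w ∂volume ∂μ := by
          simp_rw [← hinv]
      _ = ∫ w, ∫ x, (𝐞 ⟪w, x⟫ : ℂ) * ψ w ∂μ ∂volume := integral_integral_swap hint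
      _ = ∫ w, (∫ x, (𝐞 ⟪w, x⟫ : ℂ) ∂μ) * ψ w ∂volume := by
          congr 1
          ext w
          exact integral_mul_const _ _
  rw [key η inferInstance, key ρ inferInstance]
  simp_rw [h]

/-- Two finite measures giving the same integral to all complex Schwartz functions agree
on compact sets. -/
lemma SMD.measure_compact_le (η ρ : Measure E) [IsFiniteMeasure η] [IsFiniteMeasure ρ]
    (h : ∀ φ : SchwartzMap E ℂ, ∫ x, φ x ∂η = ∫ x, φ x ∂ρ)
    {K : Set E} (hK : IsCompact K) : η K ≤ ρ K := by
  rw [Set.measure_eq_iInf_isOpen K ρ]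
  simp only [le_iInf_iff]
  intro U hKU hU
  obtain ⟨g, hg, hgcs, hgK, hgU, hg01⟩ := SMD.smooth_urysohn hK hU hKU
  have hgC : ContDiff ℝ ((⊤ : ℕ∞)) fun x => (g x : ℂ) :=
    Complex.ofRealCLM.contDiff.comp hg
  have hgCcs : HasCompactSupport fun x => (g x : ℂ) :=
    hgcs.comp_left Complex.ofReal_zero
  have hint : ∫ x, g x ∂η = ∫ x, g x ∂ρ := by
    have := h (SMD.toSchwartz hgC hgCcs)
    simp only [SMD.toSchwartz_apply] at this
    have hcast : ∀ μ : Measure E, ∫ x, ((g x : ℝ) : ℂ) ∂μ = ((∫ x, g x ∂μ : ℝ) : ℂ) :=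
      fun μ => integral_ofReal
    rw [hcast, hcast] at this
    exact_mod_cast this
  have hgint : ∀ μ : Measure E, IsFiniteMeasure μ → Integrable g μ := fun μ _ =>
    hg.continuous.integrable_of_hasCompactSupport hgcs
  have h1 : (η K).toReal ≤ ∫ x, g x ∂η := by
    have heq : ∫ x, K.indicator (fun _ => (1 : ℝ)) x ∂η = (η K).toReal := by
      rw [integral_indicator_const _ hK.measurableSet, smul_eq_mul, mul_one, measureReal_def]
    rw [← heq]
    refine integral_mono ((integrable_const (1 : ℝ)).indicator hK.measurableSet)
      (hgint η inferInstance) ?_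
    intro x
    by_cases hx : x ∈ K
    · simp [Set.indicator_of_mem hx, hgK hx]
    · simp only [Set.indicator_of_notMem hx]
      exact (hg01 x).1
  have h2 : ∫ x, g x ∂ρ ≤ (ρ U).toReal := by
    have heq : ∫ x, U.indicator (fun _ => (1 : ℝ)) x ∂ρ = (ρ U).toReal := by
      rw [integral_indicator_const _ hU.measurableSet, smul_eq_mul, mul_one, measureReal_def]
    rw [← heq]
    refine integral_mono (hgint ρ inferInstance)
      ((integrable_const (1 : ℝ)).indicator hU.measurableSet) ?_
    intro x
    by_cases hx : x ∈ U
    · simpa [Set.indicator_of_mem hx] using (hg01 x).2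
    · have : g x = 0 := Function.notMem_support.mp fun hx' => hx (hgU hx')
      simp [Set.indicator_of_notMem hx, this]
  exact (ENNReal.toReal_le_toReal (measure_ne_top η K) (measure_ne_top ρ U)).mp
    (h1.trans (hint.le.trans h2))

/-- Two finite measures giving the same integral to all complex Schwartz functions
are equal. -/
lemma SMD.ext_of_schwartz (η ρ : Measure E) [IsFiniteMeasure η] [IsFiniteMeasure ρ]
    (h : ∀ φ : SchwartzMap E ℂ, ∫ x, φ x ∂η = ∫ x, φ x ∂ρ) : η = ρ := by
  have hcompact : ∀ K : Set E, IsCompact K → η K = ρ K := fun K hK =>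
    le_antisymm (SMD.measure_compact_le η ρ h hK)
      (SMD.measure_compact_le ρ η (fun φ => (h φ).symm) hK)
  ext s hs
  rw [hs.measure_eq_iSup_isCompact, hs.measure_eq_iSup_isCompact]
  exact iSup_congr fun K => iSup_congr fun _ => iSup_congr fun hK => hcompact K hK

end CharUniq

/-- Sliced moment determinacy: if `ρ` is a finite positive Borel measure on `ℝ^d`
(`d ≥ 1`) with finite absolute moments of all orders, and for every unit direction
`θ` the univariate Hamburger moment problem for the slice `ρ_θ` is determinate, then
`ρ` is uniquely determined among such measures by its sliced moments
`m_k^θ = ∫ ⟨x,θ⟫^k dρ`. -/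
theorem sliced_moment_determinacy {d : ℕ} (hd : 0 < d)
    (ρ : Measure (EuclideanSpace ℝ (Fin d))) [IsFiniteMeasure ρ]
    (hmom : ∀ n : ℕ, Integrable (fun x => ‖x‖ ^ n) ρ)
    (hdet : ∀ θ : EuclideanSpace ℝ (Fin d), ‖θ‖ = 1 →
      ∀ ν : Measure ℝ, IsFiniteMeasure ν → (∀ k : ℕ, Integrable (fun t => t ^ k) ν) →
        (∀ k : ℕ, ∫ t, t ^ k ∂ν =
          ∫ t, t ^ k ∂(ρ.map (fun x => inner ℝ x θ : EuclideanSpace ℝ (Fin d) → ℝ))) →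
        ν = ρ.map (fun x => inner ℝ x θ : EuclideanSpace ℝ (Fin d) → ℝ)) :
    ∀ η : Measure (EuclideanSpace ℝ (Fin d)), IsFiniteMeasure η →
      (∀ n : ℕ, Integrable (fun x => ‖x‖ ^ n) η) →
      (∀ θ : EuclideanSpace ℝ (Fin d), ‖θ‖ = 1 → ∀ k : ℕ,
        ∫ x, (inner ℝ x θ : ℝ) ^ k ∂η = ∫ x, (inner ℝ x θ : ℝ) ^ k ∂ρ) →
      η = ρ := by
  intro η hηfin hηmom hηeq
  have hfmeas : ∀ θ : EuclideanSpace ℝ (Fin d),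
      Measurable (fun x : EuclideanSpace ℝ (Fin d) => (inner ℝ x θ : ℝ)) := fun θ =>
    (continuous_id.inner continuous_const).measurable
  -- equal total masses
  have hmass : η Set.univ = ρ Set.univ := by
    set θ0 : EuclideanSpace ℝ (Fin d) := EuclideanSpace.single ⟨0, hd⟩ (1 : ℝ) with hθ0def
    have hθ0 : ‖θ0‖ = 1 := by
      rw [hθ0def, EuclideanSpace.norm_single]; simp
    have h0 := hηeq θ0 hθ0 0
    simp only [pow_zero, integral_const, smul_eq_mul, mul_one] at h0
    exact (ENNReal.toReal_eq_toReal_iff' (measure_ne_top _ _) (measure_ne_top _ _)).mp h0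
  -- equal one-dimensional projections
  have hmap : ∀ θ : EuclideanSpace ℝ (Fin d), ‖θ‖ = 1 →
      η.map (fun x => (inner ℝ x θ : ℝ)) = ρ.map (fun x => (inner ℝ x θ : ℝ)) := by
    intro θ hθ
    have hfm := hfmeas θ
    have hintθ : ∀ μ : Measure (EuclideanSpace ℝ (Fin d)), IsFiniteMeasure μ →
        (∀ n : ℕ, Integrable (fun x => ‖x‖ ^ n) μ) →
        ∀ k : ℕ, Integrable (fun x => (inner ℝ x θ : ℝ) ^ k) μ := by
      intro μ _ hμmom k
      refine (hμmom k).mono ((hfm.pow_const k).aestronglyMeasurable)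
        (Filter.Eventually.of_forall fun x => ?_)
      rw [Real.norm_eq_abs, Real.norm_eq_abs, abs_pow, abs_pow, abs_norm]
      refine pow_le_pow_left₀ (abs_nonneg _) ?_ k
      calc |(inner ℝ x θ : ℝ)| ≤ ‖x‖ * ‖θ‖ := abs_real_inner_le_norm x θ
        _ = ‖x‖ := by rw [hθ, mul_one]
    have hpowmeas : ∀ k : ℕ, AEStronglyMeasurable (fun t : ℝ => t ^ k)
        (η.map (fun x => (inner ℝ x θ : ℝ))) := fun k =>
      (measurable_id.pow_const k).aestronglyMeasurable
    haveI : IsFiniteMeasure (η.map (fun x => (inner ℝ x θ : ℝ))) :=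
      Measure.isFiniteMeasure_map η _
    apply hdet θ hθ _ inferInstance
    · intro k
      rw [integrable_map_measure (hpowmeas k) hfm.aemeasurable]
      exact hintθ η inferInstance hηmom k
    · intro k
      have hpm : AEStronglyMeasurable (fun t : ℝ => t ^ k)
          (ρ.map (fun x => (inner ℝ x θ : ℝ))) :=
        (measurable_id.pow_const k).aestronglyMeasurable
      rw [integral_map hfm.aemeasurable (hpowmeas k), integral_map hfm.aemeasurable hpm]
      exact hηeq θ hθ k
  -- equal characteristic functions
  have hchar : ∀ w : EuclideanSpace ℝ (Fin d),
      ∫ x, (𝐞 ⟪w, x⟫ : ℂ) ∂η = ∫ x, (𝐞 ⟪w, x⟫ : ℂ) ∂ρ := by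
    intro w
    rcases eq_or_ne w 0 with hw | hw
    · simp only [hw, inner_zero_left, AddChar.map_zero_eq_one, OneMemClass.coe_one]
      rw [integral_const, integral_const, measureReal_def, measureReal_def, hmass]
    · have hw' : ‖w‖ ≠ 0 := norm_ne_zero_iff.mpr hw
      set θ : EuclideanSpace ℝ (Fin d) := ‖w‖⁻¹ • w with hθdef
      have hθ : ‖θ‖ = 1 := by
        rw [hθdef, norm_smul, norm_inv, norm_norm, inv_mul_cancel₀ hw']
      have key : ∀ x : EuclideanSpace ℝ (Fin d), ⟪w, x⟫ = ‖w‖ * (inner ℝ x θ : ℝ) := by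
        intro x
        rw [hθdef, real_inner_smul_right]
        rw [real_inner_comm]
        field_simp
      have hg : Continuous fun t : ℝ => (𝐞 (‖w‖ * t) : ℂ) :=
        continuous_subtype_val.comp
          (Real.continuous_fourierChar.comp (continuous_const.mul continuous_id))
      calc ∫ x, (𝐞 ⟪w, x⟫ : ℂ) ∂η
          = ∫ x, (𝐞 (‖w‖ * (inner ℝ x θ : ℝ)) : ℂ) ∂η := by simp_rw [key]
        _ = ∫ t, (𝐞 (‖w‖ * t) : ℂ) ∂(η.map (fun x => (inner ℝ x θ : ℝ))) :=
            (integral_map (hfmeas θ).aemeasurable hg.aestronglyMeasurable).symm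
        _ = ∫ t, (𝐞 (‖w‖ * t) : ℂ) ∂(ρ.map (fun x => (inner ℝ x θ : ℝ))) := by rw [hmap θ hθ]
        _ = ∫ x, (𝐞 (‖w‖ * (inner ℝ x θ : ℝ)) : ℂ) ∂ρ :=
            integral_map (hfmeas θ).aemeasurable hg.aestronglyMeasurable
        _ = ∫ x, (𝐞 ⟪w, x⟫ : ℂ) ∂ρ := by simp_rw [key]
  exact SMD.ext_of_schwartz η ρ (SMD.integral_schwartz_eq η ρ hchar)
end

section
/- A probability measure on ℝ whose moment generating function is finite on an open interval around 0 is moment-determinate: any other probability measure on ℝ with the same moment sequence equals it. -/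
open MeasureTheory

open MeasureTheory Complex Filter Metric FourierTransform Real
open scoped RealInnerProductSpace ContDiff

namespace MomDet

noncomputable def G (r : ℝ) (x : ℝ) : ℝ := Real.exp (r * x) + Real.exp (-(r * x))

lemma G_nonneg (r x : ℝ) : 0 ≤ G r x := by
  unfold G; positivity

lemma exp_le_G (t x : ℝ) : Real.exp (t * x) ≤ G (|t|) x := by
  have h0 : Real.exp (t * x) ≤ Real.exp (|t| * |x|) := by
    apply Real.exp_le_exp.2
    rw [← abs_mul]; exact le_abs_self _
  refine h0.trans ?_
  unfold G
  rcases abs_cases x with ⟨hx, _⟩ | ⟨hx, _⟩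
  · rw [hx]; exact le_add_of_nonneg_right (Real.exp_pos _).le
  · rw [hx, mul_neg, ← neg_mul, neg_mul]
    exact le_add_of_nonneg_left (Real.exp_pos _).le

lemma continuous_G (r : ℝ) : Continuous (G r) := by
  unfold G; continuity

/-- series expansion of G -/
lemma G_eq_tsum (r x : ℝ) :
    G r x = ∑' n : ℕ, ((1 + (-1 : ℝ) ^ n) * r ^ n / (n.factorial : ℝ)) * x ^ n := by
  have h1 : Real.exp (r * x) = ∑' n : ℕ, (r * x) ^ n / (n.factorial : ℝ) := by
    rw [Real.exp_eq_exp_ℝ, NormedSpace.exp_eq_tsum_div]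
  have h2 : Real.exp (-(r * x)) = ∑' n : ℕ, (-(r * x)) ^ n / (n.factorial : ℝ) := by
    rw [Real.exp_eq_exp_ℝ, NormedSpace.exp_eq_tsum_div]
  rw [G, h1, h2, ← Summable.tsum_add (Real.summable_pow_div_factorial (r * x))
    (Real.summable_pow_div_factorial (-(r * x)))]
  congr 1; funext n
  rw [neg_pow, mul_pow]
  ring

lemma term_nonneg (r x : ℝ) (n : ℕ) (hr : 0 ≤ r) :
    0 ≤ ((1 + (-1 : ℝ) ^ n) * r ^ n / (n.factorial : ℝ)) * x ^ n := by
  rcases Nat.even_or_odd n with he | ho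
  · have h1 : (0:ℝ) ≤ 1 + (-1 : ℝ) ^ n := by rw [he.neg_one_pow]; norm_num
    have h2 : (0:ℝ) ≤ x ^ n := he.pow_nonneg x
    positivity
  · rw [ho.neg_one_pow]
    norm_num

lemma term_summable (r x : ℝ) :
    Summable (fun n : ℕ => ((1 + (-1 : ℝ) ^ n) * r ^ n / (n.factorial : ℝ)) * x ^ n) := by
  have := (Real.summable_pow_div_factorial (r * x)).add
    (Real.summable_pow_div_factorial (-(r * x)))
  apply this.congr
  intro n
  rw [neg_pow, mul_pow]
  ring


lemma exp_abs_le_G {r : ℝ} (hr : 0 ≤ r) (x : ℝ) : Real.exp (r * |x|) ≤ G r x := by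
  unfold G
  rcases abs_cases x with ⟨hx, _⟩ | ⟨hx, _⟩
  · rw [hx]; exact le_add_of_nonneg_right (Real.exp_pos _).le
  · rw [hx, mul_neg, ← neg_mul, neg_mul]
    exact le_add_of_nonneg_left (Real.exp_pos _).le

variable {μ ν : Measure ℝ} {δ : ℝ}

lemma integrable_G_of_mgf (hμ : ∀ t, |t| < δ → Integrable (fun x => Real.exp (t * x)) μ)
    {r : ℝ} (hr : 0 ≤ r) (hrδ : r < δ) : Integrable (G r) μ := by
  have h1 := hμ r (by rwa [_root_.abs_of_nonneg hr])
  have h2 := hμ (-r) (by rwa [abs_neg, _root_.abs_of_nonneg hr])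
  have h3 : Integrable (fun x => Real.exp (-(r * x))) μ := by
    simpa [neg_mul] using h2
  exact h1.add h3

lemma pow_abs_le (r : ℝ) (hr : 0 < r) (n : ℕ) (x : ℝ) :
    |x| ^ n ≤ ((n.factorial : ℝ) / r ^ n) * Real.exp (r * |x|) := by
  have h1 : (r * |x|) ^ n / (n.factorial : ℝ) ≤ Real.exp (r * |x|) := by
    rw [Real.exp_eq_exp_ℝ, NormedSpace.exp_eq_tsum_div]
    refine Summable.le_tsum (Real.summable_pow_div_factorial _) n (fun j _ => ?_)
    positivity
  have h2 : |x| ^ n = ((n.factorial : ℝ) / r ^ n) * ((r * |x|) ^ n / (n.factorial : ℝ)) := by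
    rw [mul_pow]
    field_simp
  rw [h2]
  have : (0:ℝ) < (n.factorial : ℝ) / r ^ n := by positivity
  exact mul_le_mul_of_nonneg_left h1 this.le

lemma integrable_pow_of_mgf (hδ : 0 < δ)
    (hμ : ∀ t, |t| < δ → Integrable (fun x => Real.exp (t * x)) μ) (n : ℕ) :
    Integrable (fun x => x ^ n) μ := by
  set r := δ / 2 with hrdef
  have hr : 0 < r := by positivity
  have hrδ : r < δ := by rw [hrdef]; linarith
  have hG := integrable_G_of_mgf hμ hr.le hrδ
  refine (hG.const_mul ((n.factorial : ℝ) / r ^ n)).mono'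
    ((continuous_pow n).aestronglyMeasurable) ?_
  filter_upwards with x
  rw [Real.norm_eq_abs, _root_.abs_pow]
  exact (pow_abs_le r hr n x).trans
    (mul_le_mul_of_nonneg_left (exp_abs_le_G hr.le x) (by positivity))

lemma lintegral_ofReal_G (ρ : Measure ℝ) (hk : ∀ k : ℕ, Integrable (fun x => x ^ k) ρ)
    {r : ℝ} (hr : 0 ≤ r) :
    ∫⁻ x, ENNReal.ofReal (G r x) ∂ρ
      = ∑' n : ℕ, ENNReal.ofReal (((1 + (-1 : ℝ) ^ n) * r ^ n / (n.factorial : ℝ))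
          * ∫ x, x ^ n ∂ρ) := by
  have hpt : ∀ x, ENNReal.ofReal (G r x)
      = ∑' n : ℕ, ENNReal.ofReal (((1 + (-1 : ℝ) ^ n) * r ^ n / (n.factorial : ℝ)) * x ^ n) := by
    intro x
    rw [G_eq_tsum]
    exact ENNReal.ofReal_tsum_of_nonneg (fun n => term_nonneg r x n hr) (term_summable r x)
  rw [lintegral_congr hpt, lintegral_tsum (f := fun n a => ENNReal.ofReal (((1 + (-1 : ℝ) ^ n) * r ^ n / (n.factorial : ℝ)) * a ^ n)) (fun n =>
    ((continuous_const.mul (continuous_pow n)).measurable.ennreal_ofReal).aemeasurable)]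
  congr 1
  funext n
  rw [← ofReal_integral_eq_lintegral_ofReal ((hk n).const_mul _)
    (Eventually.of_forall (fun x => term_nonneg r x n hr)), integral_const_mul]

lemma integrable_G_nu (hδ : 0 < δ)
    (hμ : ∀ t, |t| < δ → Integrable (fun x => Real.exp (t * x)) μ)
    (hk : ∀ k : ℕ, Integrable (fun x => x ^ k) ν)
    (hmom : ∀ k : ℕ, ∫ x, x ^ k ∂ν = ∫ x, x ^ k ∂μ)
    {r : ℝ} (hr : 0 ≤ r) (hrδ : r < δ) : Integrable (G r) ν := by
  have hGμ := integrable_G_of_mgf hμ hr hrδ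
  refine ⟨(continuous_G r).aestronglyMeasurable, ?_⟩
  rw [hasFiniteIntegral_iff_ofReal (Eventually.of_forall (fun x => G_nonneg r x))]
  have hkμ := fun n => integrable_pow_of_mgf hδ hμ n
  have h1 := lintegral_ofReal_G ν hk hr
  have h2 := lintegral_ofReal_G μ hkμ hr
  simp_rw [hmom] at h1
  rw [h1, ← h2]
  exact (hasFiniteIntegral_iff_ofReal (Eventually.of_forall (fun x => G_nonneg r x))).1 hGμ.2

lemma integrable_exp_nu (hδ : 0 < δ)
    (hμ : ∀ t, |t| < δ → Integrable (fun x => Real.exp (t * x)) μ)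
    (hk : ∀ k : ℕ, Integrable (fun x => x ^ k) ν)
    (hmom : ∀ k : ℕ, ∫ x, x ^ k ∂ν = ∫ x, x ^ k ∂μ)
    {t : ℝ} (ht : |t| < δ) : Integrable (fun x => Real.exp (t * x)) ν := by
  have hG := integrable_G_nu hδ hμ hk hmom (abs_nonneg t) ht
  refine hG.mono' (Continuous.aestronglyMeasurable (by continuity)) ?_
  filter_upwards with x
  rw [Real.norm_eq_abs, _root_.abs_of_nonneg (Real.exp_pos _).le]
  exact exp_le_G t x


lemma norm_cexp_mul (z : ℂ) (x : ℝ) : ‖Complex.exp (z * x)‖ = Real.exp (z.re * x) := by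
  rw [Complex.norm_exp]
  congr 1
  simp [Complex.mul_re]

lemma integrable_cexp (ρ : Measure ℝ) (z : ℂ) (hG : Integrable (G (|z.re|)) ρ) :
    Integrable (fun x : ℝ => Complex.exp (z * x)) ρ := by
  refine hG.mono' (Continuous.aestronglyMeasurable (by continuity)) ?_
  filter_upwards with x
  rw [norm_cexp_mul]
  exact exp_le_G _ x

lemma norm_term_eq (z : ℂ) (x : ℝ) (n : ℕ) :
    ‖(z ^ n / (n.factorial : ℂ)) * (x : ℂ) ^ n‖ = (‖z‖ ^ n / (n.factorial : ℝ)) * |x| ^ n := by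
  rw [norm_mul, norm_div, norm_pow, norm_pow, Complex.norm_real, Complex.norm_natCast,
    Real.norm_eq_abs]

lemma integral_cexp_eq_tsum (ρ : Measure ℝ) (hk : ∀ n : ℕ, Integrable (fun x => x ^ n) ρ)
    (z : ℂ) (hG : Integrable (G ‖z‖) ρ) :
    ∫ x, Complex.exp (z * x) ∂ρ
      = ∑' n : ℕ, (z ^ n / (n.factorial : ℂ)) * ((∫ x, x ^ n ∂ρ : ℝ) : ℂ) := by
  have hpt : ∀ x : ℝ, Complex.exp (z * x)
      = ∑' n : ℕ, (z ^ n / (n.factorial : ℂ)) * (x : ℂ) ^ n := by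
    intro x
    rw [Complex.exp_eq_exp_ℂ, NormedSpace.exp_eq_tsum_div]
    exact tsum_congr (fun n => by rw [mul_pow]; ring)
  have hlin : ∀ n : ℕ, ∫⁻ x, (‖(z ^ n / (n.factorial : ℂ)) * (x : ℂ) ^ n‖₊ : ENNReal) ∂ρ
      = ∫⁻ x, ENNReal.ofReal ((‖z‖ ^ n / (n.factorial : ℝ)) * |x| ^ n) ∂ρ := by
    intro n
    apply lintegral_congr
    intro x
    rw [← norm_term_eq]
    exact (ofReal_norm_eq_enorm _).symm
  have hsum : ∑' n : ℕ, ∫⁻ x, (‖(z ^ n / (n.factorial : ℂ)) * (x : ℂ) ^ n‖₊ : ENNReal) ∂ρ ≠ ⊤ := by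
    simp_rw [hlin]
    rw [← lintegral_tsum (f := fun n x => ENNReal.ofReal ((‖z‖ ^ n / (n.factorial : ℝ)) * |x| ^ n)) (fun n =>
      ((continuous_const.mul (((continuous_abs : Continuous fun x : ℝ => |x|)).pow n)).measurable.ennreal_ofReal).aemeasurable)]
    have hpt2 : ∀ x : ℝ, ∑' n : ℕ, ENNReal.ofReal ((‖z‖ ^ n / (n.factorial : ℝ)) * |x| ^ n)
        = ENNReal.ofReal (Real.exp (‖z‖ * |x|)) := by
      intro x
      rw [← ENNReal.ofReal_tsum_of_nonneg (fun n => by positivity)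
        (by
          have h := Real.summable_pow_div_factorial (‖z‖ * |x|)
          apply h.congr
          intro n
          rw [mul_pow]; ring)]
      congr 1
      rw [Real.exp_eq_exp_ℝ, NormedSpace.exp_eq_tsum_div]
      exact tsum_congr (fun n => by rw [mul_pow]; ring)
    have hle : ∫⁻ x, ∑' n : ℕ, ENNReal.ofReal ((‖z‖ ^ n / (n.factorial : ℝ)) * |x| ^ n) ∂ρ
        ≤ ∫⁻ x, ENNReal.ofReal (G ‖z‖ x) ∂ρ := by
      apply lintegral_mono
      intro x
      show ∑' n : ℕ, ENNReal.ofReal ((‖z‖ ^ n / (n.factorial : ℝ)) * |x| ^ n) ≤ _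
      rw [hpt2 x]
      exact ENNReal.ofReal_le_ofReal (exp_abs_le_G (norm_nonneg z) x)
    refine ne_top_of_le_ne_top ?_ hle
    exact ((hasFiniteIntegral_iff_ofReal
      (Eventually.of_forall (fun x => G_nonneg _ x))).1 hG.2).ne
  calc ∫ x, Complex.exp (z * x) ∂ρ
      = ∫ x, ∑' n : ℕ, (z ^ n / (n.factorial : ℂ)) * (x : ℂ) ^ n ∂ρ := by
        exact integral_congr_ae (Eventually.of_forall hpt)
    _ = ∑' n : ℕ, ∫ x, (z ^ n / (n.factorial : ℂ)) * (x : ℂ) ^ n ∂ρ := by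
        exact integral_tsum (fun n => Continuous.aestronglyMeasurable (by continuity)) hsum
    _ = ∑' n : ℕ, (z ^ n / (n.factorial : ℂ)) * ((∫ x, x ^ n ∂ρ : ℝ) : ℂ) := by
        refine tsum_congr (fun n => ?_)
        rw [integral_const_mul]
        congr 1
        have : ∀ x : ℝ, ((x : ℂ)) ^ n = ((x ^ n : ℝ) : ℂ) := by intro x; push_cast; ring
        simp_rw [this]
        exact integral_ofReal


/-- The complex MGF is differentiable on the strip. -/
lemma differentiableOn_F (ρ : Measure ℝ) (hδ : 0 < δ)
    (hI : ∀ t, |t| < δ → Integrable (fun x => Real.exp (t * x)) ρ) :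
    DifferentiableOn ℂ (fun z => ∫ x, Complex.exp (z * x) ∂ρ) {z : ℂ | |z.re| < δ} := by
  intro z₀ hz₀
  simp only [Set.mem_setOf_eq] at hz₀
  set ε : ℝ := (δ - |z₀.re|) / 3 with hεdef
  have hε : 0 < ε := by rw [hεdef]; linarith
  set s : ℝ := |z₀.re| + 2 * ε with hsdef
  have hs0 : 0 ≤ s := by positivity
  have hsδ : s < δ := by
    rw [hsdef, hεdef]; linarith [abs_nonneg z₀.re]
  have hGs : Integrable (G s) ρ := integrable_G_of_mgf hI hs0 hsδ
  have hG0 : Integrable (G (|z₀.re|)) ρ :=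
    integrable_G_of_mgf hI (abs_nonneg _) hz₀
  have key := hasDerivAt_integral_of_dominated_loc_of_deriv_le (𝕜 := ℂ)
    (μ := ρ) (F := fun z x => Complex.exp (z * x))
    (F' := fun z x => Complex.exp (z * x) * x)
    (x₀ := z₀) (bound := fun x => ε⁻¹ * G s x) (Metric.ball_mem_nhds z₀ hε)
    (Eventually.of_forall (fun z =>
      Continuous.aestronglyMeasurable (by continuity)))
    (integrable_cexp ρ z₀ hG0)
    (Continuous.aestronglyMeasurable (by continuity))
    ?_ (hGs.const_mul _)
    (Eventually.of_forall (fun x z _ => ?_))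
  · exact key.2.differentiableAt.differentiableWithinAt
  · filter_upwards with x z hz
    rw [norm_mul, norm_cexp_mul, Complex.norm_real, Real.norm_eq_abs]
    have h1 : z.re * x ≤ (|z₀.re| + ε) * |x| := by
      have h2 : |z.re| ≤ |z₀.re| + ε := by
        have h3 : |z.re - z₀.re| ≤ ‖z - z₀‖ := by
          rw [← Complex.sub_re]
          exact Complex.abs_re_le_norm _
        have h4 : ‖z - z₀‖ < ε := by
          rwa [← dist_eq_norm, ← Metric.mem_ball]
        have := abs_sub_abs_le_abs_sub z.re z₀.re
        linarith
      calc z.re * x ≤ |z.re * x| := le_abs_self _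
        _ = |z.re| * |x| := abs_mul _ _
        _ ≤ (|z₀.re| + ε) * |x| := by
          exact mul_le_mul_of_nonneg_right h2 (abs_nonneg x)
    have h5 : |x| ≤ ε⁻¹ * Real.exp (ε * |x|) := by
      have h6 : ε * |x| ≤ Real.exp (ε * |x|) := by
        linarith [Real.add_one_le_exp (ε * |x|)]
      rw [← mul_le_mul_iff_of_pos_left hε, ← mul_assoc, mul_inv_cancel₀ hε.ne', one_mul]
      exact h6
    calc Real.exp (z.re * x) * |x|
        ≤ Real.exp ((|z₀.re| + ε) * |x|) * (ε⁻¹ * Real.exp (ε * |x|)) := by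
          apply mul_le_mul (Real.exp_le_exp.2 h1) h5 (abs_nonneg x) (Real.exp_pos _).le
      _ = ε⁻¹ * Real.exp (s * |x|) := by
          rw [mul_comm (Real.exp _), mul_assoc, ← Real.exp_add]
          congr 2
          rw [hsdef]; ring
      _ ≤ ε⁻¹ * G s x := by
          exact mul_le_mul_of_nonneg_left (exp_abs_le_G hs0 x) (by positivity)
  · exact (hasDerivAt_mul_const (x : ℂ)).cexp

lemma isOpen_strip : IsOpen {z : ℂ | |z.re| < δ} :=
  isOpen_lt (by continuity) continuous_const

lemma isPreconnected_strip : IsPreconnected {z : ℂ | |z.re| < δ} := by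
  have : {z : ℂ | |z.re| < δ} = Complex.reLm ⁻¹' (Set.Ioo (-δ) δ) := by
    ext z
    simp [abs_lt, Complex.reLm]
  rw [this]
  exact ((convex_Ioo (-δ) δ).linear_preimage Complex.reLm).isPreconnected

/-- On the strip, the complex MGFs of `ν` and `μ` coincide. -/
lemma eq_on_strip (hδ : 0 < δ)
    (hμ : ∀ t, |t| < δ → Integrable (fun x => Real.exp (t * x)) μ)
    (hν : ∀ t, |t| < δ → Integrable (fun x => Real.exp (t * x)) ν)
    (hk : ∀ k : ℕ, Integrable (fun x => x ^ k) ν)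
    (hmom : ∀ k : ℕ, ∫ x, x ^ k ∂ν = ∫ x, x ^ k ∂μ)
    {z : ℂ} (hz : |z.re| < δ) :
    ∫ x, Complex.exp (z * x) ∂ν = ∫ x, Complex.exp (z * x) ∂μ := by
  have hkμ := fun n => integrable_pow_of_mgf hδ hμ n
  have hAν : AnalyticOnNhd ℂ (fun z => ∫ x, Complex.exp (z * x) ∂ν) {z : ℂ | |z.re| < δ} :=
    (differentiableOn_F ν hδ hν).analyticOnNhd isOpen_strip
  have hAμ : AnalyticOnNhd ℂ (fun z => ∫ x, Complex.exp (z * x) ∂μ) {z : ℂ | |z.re| < δ} :=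
    (differentiableOn_F μ hδ hμ).analyticOnNhd isOpen_strip
  have h0 : (0:ℂ) ∈ {z : ℂ | |z.re| < δ} := by simp [abs_of_nonneg, hδ]
  have hev : (fun z => ∫ x, Complex.exp (z * x) ∂ν)
      =ᶠ[nhds (0:ℂ)] (fun z => ∫ x, Complex.exp (z * x) ∂μ) := by
    filter_upwards [Metric.ball_mem_nhds (0:ℂ) hδ] with w hw
    rw [Metric.mem_ball, dist_zero_right] at hw
    have h1 : |w.re| < δ := lt_of_le_of_lt (Complex.abs_re_le_norm w) hw
    rw [integral_cexp_eq_tsum ν hk w (integrable_G_nu hδ hμ hk hmom (norm_nonneg w) hw),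
      integral_cexp_eq_tsum μ hkμ w (integrable_G_of_mgf hμ (norm_nonneg w) hw)]
    exact tsum_congr (fun n => by rw [hmom n])
  exact hAν.eqOn_of_preconnected_of_eventuallyEq hAμ isPreconnected_strip h0 hev hz


/-- The Fourier transform of a smooth compactly supported function is integrable. -/
lemma fourier_L1 {g : ℝ → ℂ} (hg : ContDiff ℝ ∞ g) (hs : HasCompactSupport g) :
    Integrable (𝓕 g) volume := by
  have h0 : Integrable g volume := hg.continuous.integrable_of_hasCompactSupport hs
  have hd : Differentiable ℝ g := hg.differentiable (by norm_num)
  have hg1 : ContDiff ℝ ∞ (deriv g) := (contDiff_infty_iff_deriv.mp hg).2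
  have hs1 : HasCompactSupport (deriv g) := hs.deriv
  have h1 : Integrable (deriv g) volume := hg1.continuous.integrable_of_hasCompactSupport hs1
  have hd1 : Differentiable ℝ (deriv g) := hg1.differentiable (by norm_num)
  have hs2 : HasCompactSupport (deriv (deriv g)) := hs1.deriv
  have h2 : Integrable (deriv (deriv g)) volume :=
    ((contDiff_infty_iff_deriv.mp hg1).2).continuous.integrable_of_hasCompactSupport hs2
  have e1 : 𝓕 (deriv g) = fun ξ : ℝ => (2 * π * I * ξ) • 𝓕 g ξ :=
    Real.fourier_deriv h0 hd h1
  have e2 : 𝓕 (deriv (deriv g)) = fun ξ : ℝ => (2 * π * I * ξ) • (2 * π * I * ξ) • 𝓕 g ξ := by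
    rw [Real.fourier_deriv h1 hd1 h2, e1]
  set C1 : ℝ := ∫ x, ‖g x‖ with hC1
  set C2 : ℝ := ∫ x, ‖deriv (deriv g) x‖ with hC2
  have hC2nn : 0 ≤ C2 := integral_nonneg (fun x => norm_nonneg _)
  set M : ℝ := C1 + C2 / (4 * π ^ 2) with hM
  have hbound : ∀ ξ : ℝ, ‖𝓕 g ξ‖ ≤ M * (1 + ξ ^ 2)⁻¹ := by
    intro ξ
    have b1 : ‖𝓕 g ξ‖ ≤ C1 :=
      VectorFourier.norm_fourierIntegral_le_integral_norm _ _ _ _ _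
    have b2 : ‖𝓕 (deriv (deriv g)) ξ‖ ≤ C2 :=
      VectorFourier.norm_fourierIntegral_le_integral_norm _ _ _ _ _
    have b3 : (2 * π * |ξ|) ^ 2 * ‖𝓕 g ξ‖ ≤ C2 := by
      rw [e2] at b2
      simp only [norm_smul, norm_mul, Complex.norm_ofNat, Complex.norm_real,
        Real.norm_eq_abs, Complex.norm_I] at b2
      rw [_root_.abs_of_nonneg Real.pi_pos.le] at b2
      calc (2 * π * |ξ|) ^ 2 * ‖𝓕 g ξ‖
          = 2 * π * |ξ| * (2 * π * |ξ| * ‖𝓕 g ξ‖) := by ring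
        _ ≤ C2 := by
            convert b2 using 2 <;> ring
    have hπ : 0 < π := Real.pi_pos
    have hnn : 0 ≤ ‖𝓕 g ξ‖ := norm_nonneg _
    have b4 : ξ ^ 2 * ‖𝓕 g ξ‖ ≤ C2 / (4 * π ^ 2) := by
      rw [le_div_iff₀ (by positivity)]
      calc ξ ^ 2 * ‖𝓕 g ξ‖ * (4 * π ^ 2) = (2 * π * |ξ|) ^ 2 * ‖𝓕 g ξ‖ := by
            rw [mul_pow, mul_pow, _root_.sq_abs]; ring
        _ ≤ C2 := b3
    have b5 : (1 + ξ ^ 2) * ‖𝓕 g ξ‖ ≤ M := by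
      rw [hM, add_mul, one_mul]
      exact add_le_add b1 b4
    have h12 : (0:ℝ) < 1 + ξ ^ 2 := by positivity
    rw [← div_eq_mul_inv, le_div_iff₀ h12]
    linarith [b5, mul_comm (‖𝓕 g ξ‖) (1 + ξ ^ 2)]
  have hcont : Continuous (𝓕 g) :=
    VectorFourier.fourierIntegral_continuous Real.continuous_fourierChar
      (by exact continuous_inner) h0
  refine ((integrable_inv_one_add_sq).const_mul M).mono' hcont.aestronglyMeasurable ?_
  filter_upwards with ξ
  exact hbound ξ

lemma norm_cexp_I (r : ℝ) : ‖Complex.exp (↑r * I)‖ = 1 := by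
  exact Complex.norm_exp_ofReal_mul_I r

/-- If two finite measures have the same characteristic function, integrals of nice test
functions agree. -/
lemma integral_eq_of_char [IsFiniteMeasure μ] [IsFiniteMeasure ν]
    (hchar : ∀ s : ℝ, ∫ x, Complex.exp (↑(s * x) * I) ∂ν
        = ∫ x, Complex.exp (↑(s * x) * I) ∂μ)
    {g : ℝ → ℂ} (hcont : Continuous g) (hint : Integrable g volume)
    (hF : Integrable (𝓕 g) volume) :
    ∫ x, g x ∂ν = ∫ x, g x ∂μ := by
  have hFcont : Continuous (𝓕 g) :=
    VectorFourier.fourierIntegral_continuous Real.continuous_fourierChar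
      (by exact continuous_inner) hint
  have hinv : ∀ x : ℝ, g x = ∫ ξ : ℝ, Complex.exp (↑(2 * π * (ξ * x)) * I) • 𝓕 g ξ := by
    intro x
    conv_lhs => rw [← hcont.fourierInv_fourier_eq hint hF]
    rw [Real.fourierInv_eq']
    refine integral_congr_ae (Eventually.of_forall (fun ξ => ?_))
    have h : (inner ℝ ξ x : ℝ) = ξ * x := by simp [RCLike.inner_apply, mul_comm]
    simp only [h]
  have main : ∀ (ρ : Measure ℝ), IsFiniteMeasure ρ →
      ∫ x, g x ∂ρ = ∫ ξ : ℝ, (∫ x, Complex.exp (↑(2 * π * (ξ * x)) * I) ∂ρ) * 𝓕 g ξ := by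
    intro ρ hρ
    have hprod : Integrable (Function.uncurry
        (fun x ξ => Complex.exp (↑(2 * π * (ξ * x)) * I) • 𝓕 g ξ)) (ρ.prod volume) := by
      have hmeas : AEStronglyMeasurable (Function.uncurry
          (fun x ξ => Complex.exp (↑(2 * π * (ξ * x)) * I) • 𝓕 g ξ)) (ρ.prod volume) := by
        apply Continuous.aestronglyMeasurable
        refine Continuous.smul (f := fun p : ℝ × ℝ => Complex.exp (↑(2 * π * (p.2 * p.1)) * I)) (g := fun p : ℝ × ℝ => 𝓕 g p.2) ?_ ?_
        · apply Continuous.cexp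
          refine Continuous.mul (f := fun p : ℝ × ℝ => ((2 * π * (p.2 * p.1) : ℝ) : ℂ)) ?_ continuous_const
          apply Complex.continuous_ofReal.comp
          exact (continuous_const.mul ((continuous_snd).mul (continuous_fst)))
        · exact hFcont.comp continuous_snd
      rw [integrable_prod_iff hmeas]
      constructor
      · filter_upwards with x
        apply hF.bdd_mul (c := 1)
          (Continuous.aestronglyMeasurable (by continuity))
        filter_upwards with ξ
        rw [norm_cexp_I]
      · have : ∀ x : ℝ, (∫ ξ, ‖Complex.exp (↑(2 * π * (ξ * x)) * I) • 𝓕 g ξ‖)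
            = ∫ ξ, ‖𝓕 g ξ‖ := by
          intro x
          congr 1
          funext ξ
          rw [norm_smul, norm_cexp_I, one_mul]
        simp only [Function.uncurry_apply_pair]
        simp_rw [this]
        exact integrable_const _
    calc ∫ x, g x ∂ρ
        = ∫ x, (∫ ξ : ℝ, Complex.exp (↑(2 * π * (ξ * x)) * I) • 𝓕 g ξ) ∂ρ := by
          refine integral_congr_ae (Eventually.of_forall (fun x => ?_))
          exact hinv x
      _ = ∫ ξ : ℝ, ∫ x, Complex.exp (↑(2 * π * (ξ * x)) * I) • 𝓕 g ξ ∂ρ := by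
          exact integral_integral_swap hprod
      _ = ∫ ξ : ℝ, (∫ x, Complex.exp (↑(2 * π * (ξ * x)) * I) ∂ρ) * 𝓕 g ξ := by
          refine integral_congr_ae (Eventually.of_forall (fun ξ => ?_))
          simp_rw [smul_eq_mul]
          exact integral_mul_const _ _
  rw [main ν inferInstance, main μ inferInstance]
  refine integral_congr_ae (Eventually.of_forall (fun ξ => ?_))
  have hre : ∀ x : ℝ, (↑(2 * π * (ξ * x)) : ℂ) * I = ↑((2 * π * ξ) * x) * I := by
    intro x
    congr 2
    push_cast
    ring
  simp_rw [hre]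
  exact congrArg (· * 𝓕 g ξ) (hchar (2 * π * ξ))


/-- Characteristic functions agree. -/
lemma char_eq (hδ : 0 < δ)
    (hμ : ∀ t, |t| < δ → Integrable (fun x => Real.exp (t * x)) μ)
    (hν : ∀ t, |t| < δ → Integrable (fun x => Real.exp (t * x)) ν)
    (hk : ∀ k : ℕ, Integrable (fun x => x ^ k) ν)
    (hmom : ∀ k : ℕ, ∫ x, x ^ k ∂ν = ∫ x, x ^ k ∂μ) (s : ℝ) :
    ∫ x, Complex.exp (↑(s * x) * I) ∂ν = ∫ x, Complex.exp (↑(s * x) * I) ∂μ := by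
  have hz : |((s : ℂ) * I).re| < δ := by
    simp [hδ]
  have h := eq_on_strip hδ hμ hν hk hmom hz
  have harg : ∀ x : ℝ, ((s : ℂ) * I) * x = ↑(s * x) * I := by
    intro x
    push_cast
    ring
  simp_rw [harg] at h
  exact h

/-- Integrals of real smooth compactly supported functions agree. -/
lemma integral_smooth_eq [IsFiniteMeasure μ] [IsFineMeasureDUMMY : IsFiniteMeasure ν]
    (hchar : ∀ s : ℝ, ∫ x, Complex.exp (↑(s * x) * I) ∂ν
        = ∫ x, Complex.exp (↑(s * x) * I) ∂μ)
    {g : ℝ → ℝ} (hg : ContDiff ℝ ∞ g) (hs : HasCompactSupport g) :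
    ∫ x, g x ∂ν = ∫ x, g x ∂μ := by
  have hgc : ContDiff ℝ ∞ (fun x : ℝ => (g x : ℂ)) :=
    Complex.ofRealCLM.contDiff.comp hg
  have hsc : HasCompactSupport (fun x : ℝ => (g x : ℂ)) :=
    hs.comp_left (g := Complex.ofReal) Complex.ofReal_zero
  have hint : Integrable (fun x : ℝ => (g x : ℂ)) volume :=
    hgc.continuous.integrable_of_hasCompactSupport hsc
  have hF : Integrable (𝓕 (fun x : ℝ => (g x : ℂ))) volume := fourier_L1 hgc hsc
  have key := integral_eq_of_char hchar hgc.continuous hint hF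
  have l1 : (∫ x, (g x : ℂ) ∂ν) = ((∫ x, g x ∂ν : ℝ) : ℂ) := integral_ofReal
  have l2 : (∫ x, (g x : ℂ) ∂μ) = ((∫ x, g x ∂μ : ℝ) : ℂ) := integral_ofReal
  rw [l1, l2] at key
  exact_mod_cast key

/-- The measures agree on compact intervals. -/
lemma measure_Icc_eq [IsProbabilityMeasure μ] [IsProbabilityMeasure ν]
    (hchar : ∀ s : ℝ, ∫ x, Complex.exp (↑(s * x) * I) ∂ν
        = ∫ x, Complex.exp (↑(s * x) * I) ∂μ)
    (p q : ℝ) (hpq : p ≤ q) : ν (Set.Icc p q) = μ (Set.Icc p q) := by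
  set c : ℝ := (p + q) / 2 with hc
  set φ : ℕ → ContDiffBump c := fun n =>
    ⟨(q - p) / 2 + ((n : ℝ) + 1)⁻¹, (q - p) / 2 + ((n : ℝ) + 1)⁻¹ + ((n : ℝ) + 1)⁻¹,
      by
        have h0 : (0:ℝ) < ((n : ℝ) + 1)⁻¹ := by positivity
        have h1 : (0:ℝ) ≤ q - p := by linarith
        linarith, by
        have : (0:ℝ) < ((n : ℝ) + 1)⁻¹ := by positivity
        linarith⟩ with hφdef
  have hφIn : ∀ n, (φ n).rIn = (q - p) / 2 + ((n : ℝ) + 1)⁻¹ := fun n => by rw [hφdef]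
  have hφOut : ∀ n, (φ n).rOut = (q - p) / 2 + ((n : ℝ) + 1)⁻¹ + ((n : ℝ) + 1)⁻¹ :=
    fun n => by rw [hφdef]
  have hlim : ∀ x : ℝ, Tendsto (fun n => φ n x) atTop
      (nhds ((Set.Icc p q).indicator (fun _ => (1:ℝ)) x)) := by
    intro x
    by_cases hx : x ∈ Set.Icc p q
    · rw [Set.indicator_of_mem hx]
      apply tendsto_const_nhds.congr
      intro n
      symm
      apply (φ n).one_of_mem_closedBall
      rw [Metric.mem_closedBall, Real.dist_eq, hφIn]
      obtain ⟨h1, h2⟩ := hx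
      have : |x - c| ≤ (q - p) / 2 := by
        rw [abs_le, hc]
        constructor <;> [linarith; linarith]
      have h3 : (0:ℝ) ≤ ((n : ℝ) + 1)⁻¹ := by positivity
      linarith
    · rw [Set.indicator_of_notMem hx]
      rw [Set.mem_Icc, not_and_or, not_le, not_le] at hx
      have key : ∃ e : ℝ, 0 < e ∧ (q - p) / 2 + e ≤ dist x c := by
        rcases hx with hx | hx
        · exact ⟨p - x, by linarith, by
            rw [Real.dist_eq, abs_sub_comm, _root_.abs_of_nonneg (by rw [hc]; linarith)]
            rw [hc]; linarith⟩
        · exact ⟨x - q, by linarith, by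
            rw [Real.dist_eq, _root_.abs_of_nonneg (by rw [hc]; linarith)]
            rw [hc]; linarith⟩
      obtain ⟨e, he, hed⟩ := key
      obtain ⟨N, hN⟩ := exists_nat_ge (2 / e)
      have : ∀ n ≥ N, φ n x = 0 := by
        intro n hn
        apply (φ n).zero_of_le_dist
        rw [hφOut]
        have hn1 : (2:ℝ) / e ≤ (n : ℝ) + 1 := by
          have : (N : ℝ) ≤ n := Nat.cast_le.2 hn
          linarith
        have hpos : (0:ℝ) < (n : ℝ) + 1 := by positivity
        have h4 : ((n : ℝ) + 1)⁻¹ ≤ e / 2 := by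
          rw [inv_le_comm₀ hpos (by positivity : (0:ℝ) < e / 2), inv_div]
          exact hn1
        linarith
      exact tendsto_atTop_of_eventually_const this
  have hdom : ∀ (ρ : Measure ℝ), IsProbabilityMeasure ρ →
      Tendsto (fun n => ∫ x, φ n x ∂ρ) atTop (nhds ((ρ (Set.Icc p q)).toReal)) := by
    intro ρ hρ
    have h1 : ∫ x, (Set.Icc p q).indicator (fun _ => (1:ℝ)) x ∂ρ
        = (ρ (Set.Icc p q)).toReal := by
      rw [integral_indicator measurableSet_Icc]
      simp
      rfl
    rw [← h1]
    apply tendsto_integral_of_dominated_convergence (bound := fun _ => (1:ℝ))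
    · exact fun n => ((φ n).continuous).aestronglyMeasurable
    · exact integrable_const _
    · intro n
      filter_upwards with x
      rw [Real.norm_eq_abs, _root_.abs_of_nonneg (φ n).nonneg]
      exact (φ n).le_one
    · filter_upwards with x
      exact hlim x
  have hν := hdom ν inferInstance
  have hμ := hdom μ inferInstance
  have heq : ∀ n, ∫ x, φ n x ∂ν = ∫ x, φ n x ∂μ := fun n =>
    integral_smooth_eq hchar ((φ n).contDiff) ((φ n).hasCompactSupport)
  simp_rw [heq] at hν
  have := tendsto_nhds_unique hν hμ
  exact (ENNReal.toReal_eq_toReal_iff' (measure_ne_top ν _) (measure_ne_top μ _)).1 this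


lemma measure_Iic_eq [IsProbabilityMeasure μ] [IsProbabilityMeasure ν]
    (hchar : ∀ s : ℝ, ∫ x, Complex.exp (↑(s * x) * I) ∂ν
        = ∫ x, Complex.exp (↑(s * x) * I) ∂μ)
    (a : ℝ) : ν (Set.Iic a) = μ (Set.Iic a) := by
  have hU : Set.Iic a = ⋃ n : ℕ, Set.Icc (a - n) a := by
    ext x
    simp only [Set.mem_Iic, Set.mem_iUnion, Set.mem_Icc]
    constructor
    · intro hx
      obtain ⟨n, hn⟩ := exists_nat_ge (a - x)
      exact ⟨n, by linarith, hx⟩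
    · rintro ⟨n, _, hx⟩
      exact hx
  have hmono : Monotone (fun n : ℕ => Set.Icc (a - n) a) := by
    intro m n hmn
    apply Set.Icc_subset_Icc _ le_rfl
    have : (m : ℝ) ≤ n := Nat.cast_le.2 hmn
    linarith
  rw [hU, hmono.directed_le.measure_iUnion, hmono.directed_le.measure_iUnion]
  congr 1
  funext n
  exact measure_Icc_eq hchar (a - n) a (by linarith [Nat.cast_nonneg (α := ℝ) n])

end MomDet

/-- A probability measure on `ℝ` whose moment generating function is finite on an
open interval around `0` is moment-determinate: any probability measure with the
same moment sequence equals it. -/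
theorem determinate_of_mgf_finite_near_zero (μ : Measure ℝ) [IsProbabilityMeasure μ]
    (hmgf : ∃ δ : ℝ, 0 < δ ∧ ∀ t : ℝ, |t| < δ →
      Integrable (fun x => Real.exp (t * x)) μ) :
    ∀ ν : Measure ℝ, IsProbabilityMeasure ν →
      (∀ k : ℕ, Integrable (fun x => x ^ k) ν) →
      (∀ k : ℕ, ∫ x, x ^ k ∂ν = ∫ x, x ^ k ∂μ) →
      ν = μ := by
  obtain ⟨δ, hδ, hμ⟩ := hmgf
  intro ν hprob hk hmom
  have hν : ∀ t, |t| < δ → Integrable (fun x => Real.exp (t * x)) ν :=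
    fun t ht => MomDet.integrable_exp_nu hδ hμ hk hmom ht
  have hchar := MomDet.char_eq hδ hμ hν hk hmom
  exact MeasureTheory.Measure.ext_of_Iic ν μ (MomDet.measure_Iic_eq hchar)
end

section
/- The zero set on the unit sphere S^{d−1} (d ≥ 2) of a polynomial p : ℝ^d → ℝ that does not vanish identically on S^{d−1} has zero surface (spherical) measure. -/
open MeasureTheory MvPolynomial

lemma mv_zero_set_null : ∀ (n : ℕ) (p : MvPolynomial (Fin n) ℝ), p ≠ 0 →
    volume {x : Fin n → ℝ | eval x p = 0} = 0 := by
  intro n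
  induction n with
  | zero =>
    intro p hp
    obtain ⟨a, rfl⟩ := MvPolynomial.C_surjective (Fin 0) p
    have ha : a ≠ 0 := by simpa using hp
    simp [ha]
  | succ n ih =>
    intro p hp
    set q := finSuccEquiv ℝ n p with hq
    have hq0 : q ≠ 0 := by
      simpa [hq] using (map_ne_zero_iff _ (finSuccEquiv ℝ n).injective).2 hp
    set c := q.coeff q.natDegree with hc
    have hc0 : c ≠ 0 := by simpa [hc] using Polynomial.leadingCoeff_ne_zero.2 hq0
    set s' : Set ((Fin n → ℝ) × ℝ) :=
      {z | eval (Fin.cons z.2 z.1) p = 0} with hs'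
    have hmeas' : MeasurableSet s' := by
      have hcont : Continuous fun z : (Fin n → ℝ) × ℝ => eval (Fin.cons z.2 z.1) p := by
        apply (MvPolynomial.continuous_eval p).comp
        refine continuous_pi fun i => ?_
        refine Fin.cases ?_ ?_ i
        · simpa using continuous_snd
        · intro j; simpa [Function.comp_def] using (continuous_apply j).comp continuous_fst
      exact (isClosed_singleton.preimage hcont).measurableSet
    have key : (volume : Measure ((Fin n → ℝ) × ℝ)) s' = 0 := by
      rw [Measure.volume_eq_prod, Measure.measure_prod_null hmeas']
      have hbad : volume {y : Fin n → ℝ | eval y c = 0} = 0 := ih c hc0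
      have hae : ∀ᵐ y : Fin n → ℝ, eval y c ≠ 0 := by
        rw [ae_iff]; simpa using hbad
      filter_upwards [hae] with y hy
      have hmap : (q.map (eval y)) ≠ 0 := by
        intro h0
        apply hy
        have := congrArg (fun r => Polynomial.coeff r q.natDegree) h0
        have h2 : eval y q.leadingCoeff = 0 := by simpa [Polynomial.coeff_map] using this
        exact h2
      have hset : (Prod.mk y ⁻¹' s') = {a : ℝ | Polynomial.eval a (q.map (eval y)) = 0} := by
        ext a
        simp only [Set.mem_preimage, Set.mem_setOf_eq, hs']
        rw [eval_eq_eval_mv_eval']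
      simp only [Pi.zero_apply]
      rw [hset]
      exact (Polynomial.finite_setOf_isRoot hmap).measure_zero _
    have hmp := volume_preserving_piFinSuccAbove (fun _ : Fin (n+1) => ℝ) 0
    have hswap : MeasurePreserving (Prod.swap : ℝ × (Fin n → ℝ) → (Fin n → ℝ) × ℝ)
        volume volume := by
      rw [Measure.volume_eq_prod, Measure.volume_eq_prod]
      exact Measure.measurePreserving_swap
    have hZ : {x : Fin (n+1) → ℝ | eval x p = 0}
        = (MeasurableEquiv.piFinSuccAbove (fun _ : Fin (n+1) => ℝ) 0) ⁻¹'
          (Prod.swap ⁻¹' s') := by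
      ext x
      have hx : (MeasurableEquiv.piFinSuccAbove (fun _ : Fin (n+1) => ℝ) 0) x
          = (x 0, Fin.tail x) := by
        simp only [MeasurableEquiv.piFinSuccAbove_apply]
        refine Prod.ext ?_ ?_
        · rfl
        · funext j; simp [Fin.removeNth, Fin.tail, Fin.succAbove]
      simp only [Set.mem_preimage, hx, Prod.swap_prod_mk, Set.mem_setOf_eq, hs',
        Fin.cons_self_tail]
    rw [hZ, hmp.measure_preimage ((hmeas'.preimage measurable_swap)).nullMeasurableSet,
      hswap.measure_preimage hmeas'.nullMeasurableSet]
    exact key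

open MvPolynomial

lemma aux_field {K : Type*} [Field K] [CharZero K] (c : K) (hc0 : c ≠ 0)
    (A B : Polynomial K) (hA' : A ≠ 0)
    (hB' : B^2 = A^2 * (Polynomial.X^2 + Polynomial.C c)) : False := by
  set q : Polynomial K := Polynomial.X^2 + Polynomial.C c with hqdef
  have hq_deg : q.degree = 2 := by
    rw [hqdef]; exact Polynomial.degree_X_pow_add_C (by norm_num) c
  have hq_sep : q.Separable := by
    have hder : q.derivative = Polynomial.C 2 * Polynomial.X := by
      simp [hqdef, Polynomial.derivative_X_pow]
      rw [one_add_one_eq_two]; exact (map_ofNat Polynomial.C 2).symm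
    refine ⟨Polynomial.C c⁻¹, -(Polynomial.C (c⁻¹/2) * Polynomial.X), ?_⟩
    rw [hder, hqdef]
    have e1 : c⁻¹/2*2 = c⁻¹ := div_mul_cancel₀ c⁻¹ two_ne_zero
    have e2 : (Polynomial.C c⁻¹) * (Polynomial.X^2 + Polynomial.C c)
        + -(Polynomial.C (c⁻¹/2) * Polynomial.X) * (Polynomial.C 2 * Polynomial.X)
        = Polynomial.C (c⁻¹*c) + Polynomial.C c⁻¹ * Polynomial.X^2
          - Polynomial.C (c⁻¹/2*2) * Polynomial.X^2 := by
      simp only [Polynomial.C_mul]; ring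
    rw [e2, e1, inv_mul_cancel₀ hc0, Polynomial.C_1]
    ring
  have hq_sf : Squarefree q := hq_sep.squarefree
  set F := FractionRing (Polynomial K)
  set ι : Polynomial K →+* F := algebraMap (Polynomial K) F with hι
  have hιinj : Function.Injective ι := IsFractionRing.injective _ _
  set x : F := ι B / ι A with hx
  have ha2 : ι A ≠ 0 := fun h0 => hA' (hιinj (by rw [h0, map_zero]))
  have hx2 : x^2 = ι q := by
    rw [hx, div_pow, ← map_pow, hB', map_mul, map_pow]
    exact mul_div_cancel_left₀ _ (pow_ne_zero 2 ha2)
  have hint : IsIntegral (Polynomial K) x := by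
    refine ⟨Polynomial.X^2 - Polynomial.C q, Polynomial.monic_X_pow_sub_C q (by norm_num), ?_⟩
    simp [Polynomial.eval₂_sub, hx2, hι]
  obtain ⟨y, hy⟩ := IsIntegrallyClosed.isIntegral_iff.mp hint
  have hy2 : y^2 = q := by
    apply hιinj
    rw [map_pow, hy, hx2]
  have h1 : IsUnit y := hq_sf y (by rw [← hy2]; exact ⟨1, by ring⟩)
  have h2 : IsUnit q := by rw [← hy2, sq]; exact h1.mul h1
  have h3 := Polynomial.degree_eq_zero_of_isUnit h2
  rw [hq_deg] at h3
  norm_num at h3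

lemma sq_eq_sq_mul_sumsq {n : ℕ} (hn : 1 ≤ n) (A B : MvPolynomial (Fin (n+1)) ℝ)
    (h : B^2 = A^2 * (∑ i, X i^2)) : A = 0 ∧ B = 0 := by
  set S := MvPolynomial (Fin n) ℝ
  set K := FractionRing S
  set ψ : MvPolynomial (Fin (n+1)) ℝ → Polynomial K :=
    fun r => Polynomial.map (algebraMap S K) (finSuccEquiv ℝ n r) with hψ
  have hψinj : Function.Injective ψ := by
    intro a b hab
    exact (finSuccEquiv ℝ n).injective
      (Polynomial.map_injective _ (IsFractionRing.injective S K) hab)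
  have hψmul : ∀ a b, ψ (a*b) = ψ a * ψ b := by
    intro a b; simp [hψ, Polynomial.map_mul]
  have hψpow : ∀ a k, ψ (a^k) = (ψ a)^k := by
    intro a k; simp [hψ, Polynomial.map_pow]
  set c : K := algebraMap S K (∑ i : Fin n, X i^2) with hcdef
  have hc0 : c ≠ 0 := by
    rw [hcdef]
    intro h0
    have h1 : (∑ i : Fin n, (X i:S)^2) = 0 :=
      (map_eq_zero_iff _ (IsFractionRing.injective S K)).1 h0
    have h2 := congrArg (eval (fun _ => (1:ℝ))) h1
    simp at h2
    omega
  have hψN : ψ (∑ i : Fin (n+1), X i^2) = Polynomial.X^2 + Polynomial.C c := by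
    rw [hψ]
    rw [show (∑ i : Fin (n+1), (X i : MvPolynomial (Fin (n+1)) ℝ)^2)
        = X 0^2 + ∑ i : Fin n, X i.succ^2 from Fin.sum_univ_succ _]
    simp only [map_add, map_sum, map_pow, finSuccEquiv_X_zero, finSuccEquiv_X_succ,
      Polynomial.map_add, Polynomial.map_pow, Polynomial.map_sum, Polynomial.map_X,
      Polynomial.map_C]
    congr 1
    rw [hcdef, map_sum, map_sum]
    refine Finset.sum_congr rfl fun i _ => ?_
    rw [map_pow, map_pow]
  have hA : A = 0 := by
    by_contra hA0
    have hψ0 : ψ (0 : MvPolynomial (Fin (n+1)) ℝ) = 0 := by simp [hψ]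
    have hA' : ψ A ≠ 0 := fun h0 => hA0 (hψinj (h0.trans hψ0.symm))
    have hB' : (ψ B)^2 = (ψ A)^2 * (Polynomial.X^2 + Polynomial.C c) := by
      rw [← hψpow, h, hψmul, hψpow, hψN]
    exact aux_field c hc0 (ψ A) (ψ B) hA' hB'
  refine ⟨hA, ?_⟩
  have hB2 : B^2 = 0 := by rw [h, hA]; ring
  exact pow_eq_zero_iff (by norm_num) |>.1 hB2

open MvPolynomial Finset

lemma eval_scale {d m : ℕ} {φ : MvPolynomial (Fin d) ℝ} (hφ : φ.IsHomogeneous m)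
    (r : ℝ) (y : Fin d → ℝ) :
    eval (fun i => r * y i) φ = r ^ m * eval y φ := by
  rw [eval_eq, eval_eq, Finset.mul_sum]
  refine Finset.sum_congr rfl fun e he => ?_
  have hdeg : ∑ i ∈ e.support, e i = m := by
    have := hφ (mem_support_iff.1 he)
    rw [Finsupp.weight_apply, Finsupp.sum] at this
    simpa using this
  simp_rw [mul_pow]
  rw [Finset.prod_mul_distrib, Finset.prod_pow_eq_pow_sum, hdeg]
  ring

noncomputable def sumSq (d : ℕ) : MvPolynomial (Fin d) ℝ := ∑ i, X i ^ 2

lemma sumSq_hom (d : ℕ) : (sumSq d).IsHomogeneous 2 := by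
  refine MvPolynomial.IsHomogeneous.sum _ _ _ fun i _ => ?_
  simpa using isHomogeneous_X_pow (R := ℝ) i 2

lemma eval_sumSq {d : ℕ} (y : Fin d → ℝ) : eval y (sumSq d) = ∑ i, (y i)^2 := by
  simp [sumSq]

noncomputable def polyE {d : ℕ} (p : MvPolynomial (Fin d) ℝ) : MvPolynomial (Fin d) ℝ :=
  ∑ k ∈ range (p.totalDegree + 1),
    if Even k then homogeneousComponent k p * (sumSq d) ^ ((2 * p.totalDegree - k)/2) else 0

noncomputable def polyO {d : ℕ} (p : MvPolynomial (Fin d) ℝ) : MvPolynomial (Fin d) ℝ :=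
  ∑ k ∈ range (p.totalDegree + 1),
    if Even k then 0 else homogeneousComponent k p * (sumSq d) ^ ((2 * p.totalDegree + 1 - k)/2)

lemma polyE_hom {d : ℕ} (p : MvPolynomial (Fin d) ℝ) :
    (polyE p).IsHomogeneous (2 * p.totalDegree) := by
  refine MvPolynomial.IsHomogeneous.sum _ _ _ fun k hk => ?_
  rw [Finset.mem_range] at hk
  by_cases h : Even k
  · rw [if_pos h]
    have := (homogeneousComponent_isHomogeneous k p).mul ((sumSq_hom d).pow ((2 * p.totalDegree - k)/2))
    have he : k + 2 * ((2 * p.totalDegree - k)/2) = 2 * p.totalDegree := by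
      obtain ⟨t, rfl⟩ := h; omega
    rwa [he] at this
  · rw [if_neg h]; exact isHomogeneous_zero _ _ _

lemma polyO_hom {d : ℕ} (p : MvPolynomial (Fin d) ℝ) :
    (polyO p).IsHomogeneous (2 * p.totalDegree + 1) := by
  refine MvPolynomial.IsHomogeneous.sum _ _ _ fun k hk => ?_
  rw [Finset.mem_range] at hk
  by_cases h : Even k
  · rw [if_pos h]; exact isHomogeneous_zero _ _ _
  · rw [if_neg h]
    have := (homogeneousComponent_isHomogeneous k p).mul ((sumSq_hom d).pow ((2 * p.totalDegree + 1 - k)/2))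
    have he : k + 2 * ((2 * p.totalDegree + 1 - k)/2) = 2 * p.totalDegree + 1 := by
      rw [Nat.not_even_iff_odd] at h; obtain ⟨t, rfl⟩ := h; omega
    rwa [he] at this

lemma eval_polyE_add_polyO {d : ℕ} (p : MvPolynomial (Fin d) ℝ) {y : Fin d → ℝ}
    (hy : eval y (sumSq d) = 1) :
    eval y (polyE p) + eval y (polyO p) = eval y p := by
  rw [polyE, polyO, map_sum, map_sum, ← Finset.sum_add_distrib]
  have : ∀ k ∈ range (p.totalDegree + 1),
      eval y (if Even k then homogeneousComponent k p * (sumSq d) ^ ((2 * p.totalDegree - k)/2) else 0)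
      + eval y (if Even k then 0 else homogeneousComponent k p * (sumSq d) ^ ((2 * p.totalDegree + 1 - k)/2))
      = eval y (homogeneousComponent k p) := by
    intro k _
    by_cases h : Even k <;> simp [h, map_mul, map_pow, hy]
  rw [Finset.sum_congr rfl this, ← map_sum, sum_homogeneousComponent]

noncomputable def polyQ {d : ℕ} (p : MvPolynomial (Fin d) ℝ) : MvPolynomial (Fin d) ℝ :=
  (polyE p)^2 * sumSq d - (polyO p)^2

lemma eval_polyQ_scale {d : ℕ} (p : MvPolynomial (Fin d) ℝ) {y : Fin d → ℝ} (r : ℝ)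
    (hy : eval y (sumSq d) = 1) (hyp : eval y p = 0) :
    eval (fun i => r * y i) (polyQ p) = 0 := by
  have hEO : eval y (polyE p) = - eval y (polyO p) := by
    have := eval_polyE_add_polyO p hy
    rw [hyp] at this; linarith
  rw [polyQ, map_sub, map_mul, map_pow, map_pow,
    eval_scale (polyE_hom p), eval_scale (polyO_hom p), eval_scale (sumSq_hom d), hy, hEO]
  ring

lemma polyQ_ne_zero {d : ℕ} (hd : 2 ≤ d) (p : MvPolynomial (Fin d) ℝ)
    (hp : ∃ y : Fin d → ℝ, eval y (sumSq d) = 1 ∧ eval y p ≠ 0) :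
    polyQ p ≠ 0 := by
  intro h0
  obtain ⟨y, hy1, hy2⟩ := hp
  have hsub : (polyO p)^2 = (polyE p)^2 * sumSq d := by
    have h1 : (polyE p)^2 * sumSq d - (polyO p)^2 = 0 := h0
    rw [sub_eq_zero] at h1
    exact h1.symm
  simp only [sumSq] at hsub
  obtain ⟨m, rfl⟩ : ∃ m, d = m + 1 := ⟨d - 1, by omega⟩
  obtain ⟨hE0, hO0⟩ := sq_eq_sq_mul_sumsq (by omega) (polyE p) (polyO p) hsub
  apply hy2
  rw [← eval_polyE_add_polyO p hy1, hE0, hO0]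
  simp

lemma euclid_zero_set_null {d : ℕ} (Q : MvPolynomial (Fin d) ℝ) (hQ : Q ≠ 0) :
    volume {x : EuclideanSpace ℝ (Fin d) | eval (fun i => x i) Q = 0} = 0 := by
  have hmp := EuclideanSpace.volume_preserving_symm_measurableEquiv_toLp (Fin d)
  have hmeas : MeasurableSet {x : Fin d → ℝ | eval x Q = 0} :=
    (isClosed_singleton.preimage (MvPolynomial.continuous_eval Q)).measurableSet
  have hrfl : {x : EuclideanSpace ℝ (Fin d) | eval (fun i => x i) Q = 0}
      = (MeasurableEquiv.toLp 2 (Fin d → ℝ)).symm ⁻¹' {x : Fin d → ℝ | eval x Q = 0} := rfl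
  rw [hrfl, hmp.measure_preimage hmeas.nullMeasurableSet]
  exact mv_zero_set_null d Q hQ

open Metric in
lemma sumSq_eval_of_sphere {d : ℕ} (θ : sphere (0 : EuclideanSpace ℝ (Fin d)) 1) :
    eval (fun i => (θ : EuclideanSpace ℝ (Fin d)) i) (sumSq d) = 1 := by
  have h1 : ‖(θ : EuclideanSpace ℝ (Fin d))‖ = 1 := by
    simpa using mem_sphere_zero_iff_norm.1 θ.2
  rw [EuclideanSpace.norm_eq] at h1
  have h3 : ∑ i, ‖(θ : EuclideanSpace ℝ (Fin d)) i‖^2 = 1 := by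
    have := congrArg (fun t : ℝ => t^2) h1
    simpa [Real.sq_sqrt (Finset.sum_nonneg fun i _ => sq_nonneg _)] using this
  rw [eval_sumSq]
  calc ∑ i, ((θ : EuclideanSpace ℝ (Fin d)) i)^2
      = ∑ i, ‖(θ : EuclideanSpace ℝ (Fin d)) i‖^2 :=
        Finset.sum_congr rfl fun i _ => by rw [Real.norm_eq_abs, sq_abs]
    _ = 1 := h3

open Metric

/-- The zero set, on the unit sphere `S^{d-1}` (`d ≥ 2`) with its surface measure,
of a real polynomial in `d` variables not vanishing identically on the sphere, has
surface measure zero. -/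
theorem polynomial_zero_set_sphere_measure_zero {d : ℕ} (hd : 2 ≤ d)
    (p : MvPolynomial (Fin d) ℝ)
    (hp : ∃ θ : sphere (0 : EuclideanSpace ℝ (Fin d)) 1,
      MvPolynomial.eval (fun i => (θ : EuclideanSpace ℝ (Fin d)) i) p ≠ 0) :
    (volume : Measure (EuclideanSpace ℝ (Fin d))).toSphere
      {θ : sphere (0 : EuclideanSpace ℝ (Fin d)) 1 |
        MvPolynomial.eval (fun i => (θ : EuclideanSpace ℝ (Fin d)) i) p = 0} = 0 := by
  have hcont : Continuous fun x : EuclideanSpace ℝ (Fin d) => eval (fun i => x i) p :=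
    (MvPolynomial.continuous_eval p).comp (continuous_pi fun i => (continuous_apply i).comp (PiLp.continuous_ofLp _ _))
  have hs : MeasurableSet {θ : sphere (0 : EuclideanSpace ℝ (Fin d)) 1 |
      MvPolynomial.eval (fun i => (θ : EuclideanSpace ℝ (Fin d)) i) p = 0} := by
    have : Continuous fun θ : sphere (0 : EuclideanSpace ℝ (Fin d)) 1 =>
        eval (fun i => (θ : EuclideanSpace ℝ (Fin d)) i) p :=
      hcont.comp continuous_subtype_val
    exact (isClosed_singleton.preimage this).measurableSet
  rw [Measure.toSphere_apply' _ hs]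
  refine mul_eq_zero.2 (Or.inr ?_)
  have hQne : polyQ p ≠ 0 := by
    refine polyQ_ne_zero hd p ?_
    obtain ⟨θ₀, hθ₀⟩ := hp
    exact ⟨fun i => (θ₀ : EuclideanSpace ℝ (Fin d)) i, sumSq_eval_of_sphere θ₀, hθ₀⟩
  refine measure_mono_null ?_ (euclid_zero_set_null (polyQ p) hQne)
  rintro x hx
  rw [Set.mem_smul] at hx
  obtain ⟨r, hr, v, hv, rfl⟩ := hx
  obtain ⟨θ, hθs, rfl⟩ := hv
  have hcoord : (fun i => (r • (θ : EuclideanSpace ℝ (Fin d))) i)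
      = fun i => r * (θ : EuclideanSpace ℝ (Fin d)) i := by
    funext i; simp
  show eval (fun i => (r • (θ : EuclideanSpace ℝ (Fin d))) i) (polyQ p) = 0
  rw [hcoord]
  exact eval_polyQ_scale p r (sumSq_eval_of_sphere θ) hθs
end
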